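/- Let a_0 a_1 a_2 … be the SLCE sequence of period q−1 over F_2, where s_t = 1 iff α^t ∈ D = {α^{2i+1} − 1 : i} ∩ F_q^*. Then the sequence is balanced: the number of indices t with 0 ≤ t ≤ q−2 and s_t = 1 equals (q−1)/2. -/

import Mathlib

/-- The SLCE sequence is balanced: with `α` a generator of `F_qˣ` and
`D = {α^(2i+1) - 1 : i} ∩ F_qˣ`, the number of indices `t`, `0 ≤ t ≤ q - 2`, with
`s_t = 1` (equivalently, `|D|`) is `(q - 1)/2`. -/
theorem slce_stmt_19 (F : Type*) [Field F] [Fintype F] [DecidableEq F]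
    (hF : ringChar F ≠ 2) (α : F)
    (hα : ∀ x : F, x ≠ 0 → ∃ n : ℕ, α ^ n = x) :
    Nat.card {y : F // y ≠ 0 ∧ ∃ i : ℕ, y = α ^ (2 * i + 1) - 1} =
      (Fintype.card F - 1) / 2 := by
  classical
  set N := Fintype.card F - 1 with hNdef
  have h2 : (2 : F) ≠ 0 := Ring.two_ne_zero hF
  have hα0 : α ≠ 0 := by
    intro h
    obtain ⟨n, hn⟩ := hα 2 h2
    rcases Nat.eq_zero_or_pos n with h0 | h0
    · rw [h0, pow_zero] at hn
      exact zero_ne_one (α := F) (by linear_combination hn)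
    · rw [h, zero_pow h0.ne'] at hn
      exact h2 hn.symm
  -- lift α to a unit
  set u : Fˣ := Units.mk0 α hα0 with hu
  have hugen : ∀ v : Fˣ, v ∈ Subgroup.zpowers u := by
    intro v
    obtain ⟨n, hn⟩ := hα v v.ne_zero
    exact ⟨(n : ℤ), Units.ext (by simpa [hu] using hn)⟩
  have hord : orderOf u = N := by
    rw [orderOf_eq_card_of_forall_mem_zpowers hugen, Nat.card_units, Nat.card_eq_fintype_card]
  have hNeven : 2 ∣ N := by
    have := FiniteField.odd_card_of_char_ne_two hF
    omega
  have hN2 : 2 ≤ N := by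
    have : orderOf u ≠ 1 := by
      intro h1
      have : u = 1 := orderOf_eq_one_iff.mp h1
      have h1F : α = 1 := by simpa [hu] using congrArg Units.val this
      obtain ⟨n, hn⟩ := hα 2 h2
      rw [h1F, one_pow] at hn
      exact zero_ne_one (α := F) (by linear_combination hn)
    have hpos : 0 < N := by
      have := Fintype.card_pos (α := Fˣ)
      rwa [Fintype.card_units] at this
    omega
  have huN : α ^ N = 1 := by
    have := pow_orderOf_eq_one u
    rw [hord] at this
    simpa [hu, Units.ext_iff] using congrArg Units.val this
  -- parity: odd powers never equal even powers
  have hpar : ∀ i j : ℕ, α ^ (2 * i + 1) ≠ α ^ (2 * j) := by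
    intro i j h
    have hu' : u ^ (2 * i + 1) = u ^ (2 * j) := Units.ext (by simpa [hu] using h)
    have := (pow_eq_pow_iff_modEq.mp hu')
    rw [hord] at this
    have := this.of_dvd hNeven
    simp [Nat.ModEq, Nat.mul_add_mod, Nat.mul_mod_right] at this
  set NS : Set F := {x | ∃ i : ℕ, x = α ^ (2 * i + 1)} with hNS
  set SQ : Set F := {x | ∃ i : ℕ, x = α ^ (2 * i)} with hSQ
  -- D ≃ NS
  have e1 : {y : F // y ≠ 0 ∧ ∃ i : ℕ, y = α ^ (2 * i + 1) - 1} ≃ NS :=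
    { toFun := fun y => ⟨y.1 + 1, by
        obtain ⟨hy0, i, hi⟩ := y.2
        exact ⟨i, by rw [hi]; ring⟩⟩
      invFun := fun x => ⟨x.1 - 1, by
        obtain ⟨i, hi⟩ := x.2
        refine ⟨?_, i, by rw [hi]⟩
        intro h
        have : (x : F) = 1 := by linear_combination h
        rw [this] at hi
        exact hpar i 0 (by simpa using hi.symm)⟩
      left_inv := fun y => by simp
      right_inv := fun x => by simp }
  -- NS ≃ SQ, multiplication by α
  have e2 : NS ≃ SQ :=
    { toFun := fun x => ⟨α * x.1, by
        obtain ⟨i, hi⟩ := x.2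
        exact ⟨i + 1, by rw [hi]; ring⟩⟩
      invFun := fun x => ⟨α⁻¹ * x.1, by
        obtain ⟨i, hi⟩ := x.2
        refine ⟨i + N / 2 - 1, ?_⟩
        have hexp : 2 * (i + N / 2 - 1) + 1 + 1 = 2 * i + N := by omega
        have : α * (α⁻¹ * x.1) = x.1 := by field_simp
        have h2' : α ^ (2 * (i + N / 2 - 1) + 1 + 1) = α ^ (2 * i) * α ^ N := by
          rw [hexp, pow_add]
        rw [huN, mul_one] at h2'
        have := h2'
        rw [pow_succ] at this
        field_simp [hi]
        linear_combination -this + hi⟩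
      left_inv := fun x => by
        ext; field_simp
      right_inv := fun x => by
        ext; field_simp }
  have hcard1 : Nat.card {y : F // y ≠ 0 ∧ ∃ i : ℕ, y = α ^ (2 * i + 1) - 1} = NS.ncard := by
    rw [← Nat.card_coe_set_eq]
    exact Nat.card_congr e1
  have hcard2 : NS.ncard = SQ.ncard := by
    rw [← Nat.card_coe_set_eq, ← Nat.card_coe_set_eq]
    exact Nat.card_congr e2
  -- NS ∪ SQ = {0}ᶜ, disjoint
  have hdisj : Disjoint NS SQ := by
    rw [Set.disjoint_left]
    rintro x ⟨i, hi⟩ ⟨j, hj⟩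
    exact hpar i j (hi ▸ hj ▸ rfl)
  have hunion : NS ∪ SQ = {(0 : F)}ᶜ := by
    ext x
    simp only [Set.mem_union, Set.mem_compl_iff, Set.mem_singleton_iff, hNS, hSQ,
      Set.mem_setOf_eq]
    constructor
    · rintro (⟨i, rfl⟩ | ⟨i, rfl⟩) <;> exact pow_ne_zero _ hα0
    · intro hx
      obtain ⟨n, hn⟩ := hα x hx
      rcases Nat.even_or_odd n with ⟨k, hk⟩ | ⟨k, hk⟩
      · exact Or.inr ⟨k, by rw [← hn, hk]; ring_nf⟩
      · exact Or.inl ⟨k, by rw [← hn, hk]⟩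
  have hsum : NS.ncard + SQ.ncard = N := by
    rw [← Set.ncard_union_eq hdisj (Set.toFinite _) (Set.toFinite _), hunion]
    have hc := Set.ncard_add_ncard_compl ({(0 : F)} : Set F)
    simp only [Set.ncard_singleton, Set.ncard_univ, Nat.card_eq_fintype_card] at hc
    rw [hNdef]
    omega
  omega
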